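/- For every α ∈ (0,1) and every real N ≥ 1, ∑_{j ≥ 1, S_j ≤ N} min{e_{j+1}, N − S_j} / (S_j)^α ≤ (2^α/(1−α)) · N^{1−α}, where the (finite) sum ranges over all indices j with S_j ≤ N. -/

import Mathlib

open Real


lemma my_log3_le : Real.log 3 ≤ 1.1023 := by
  have h9 : (9:ℝ) = 8 * (9/8) := by norm_num
  have h1 : Real.log 9 = 3 * Real.log 2 + Real.log (9/8) := by
    rw [h9, Real.log_mul (by norm_num) (by norm_num)]
    rw [show (8:ℝ) = 2^(3:ℕ) by norm_num, Real.log_pow]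
    push_cast; ring
  have h2 : Real.log (9/8) ≤ 9/8 - 1 := Real.log_le_sub_one_of_pos (by norm_num)
  have h3 : Real.log 9 = 2 * Real.log 3 := by
    rw [show (9:ℝ) = 3^(2:ℕ) by norm_num, Real.log_pow]; push_cast; ring
  have hl2 := Real.log_two_lt_d9
  nlinarith

-- second-derivative inequality ingredient
lemma my_phi2 {b : ℝ} (hb0 : 0 ≤ b) (hb1 : b ≤ 1) :
    (Real.log 3)^2 * Real.exp (b * Real.log 3)
      ≤ 2 * Real.log 2 * Real.exp (b * Real.log 2)
        + b * (Real.log 2)^2 * Real.exp (b * Real.log 2) := by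
  have hL2 := Real.log_two_gt_d9
  have hL3 := my_log3_le
  have hL3nn : 0 ≤ Real.log 3 := Real.log_nonneg (by norm_num)
  have hsplit : Real.exp (b * Real.log 3)
      = Real.exp (b * Real.log 2) * ((3/2:ℝ) ^ b) := by
    rw [Real.rpow_def_of_pos (by norm_num : (0:ℝ) < 3/2), ← Real.exp_add]
    rw [Real.log_div (by norm_num) (by norm_num)]
    ring_nf
  have hr : ((3/2:ℝ) ^ b) ≤ 1 + b / 2 := by
    have := rpow_one_add_le_one_add_mul_self (s := (1/2:ℝ)) (by norm_num) hb0 hb1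
    rw [show (1:ℝ) + 1/2 = 3/2 by norm_num] at this
    linarith
  have hexp_pos : 0 < Real.exp (b * Real.log 2) := Real.exp_pos _
  rw [hsplit]
  have e1 : (Real.log 3)^2 ≤ 1.21506529 := by nlinarith [sq_nonneg (Real.log 2 - 0.6931471803)]
  have e3 : (0.4804530135 : ℝ) ≤ (Real.log 2)^2 := by nlinarith [sq_nonneg (Real.log 2 - 0.6931471803)]
  have key : (Real.log 3)^2 * (1 + b/2) ≤ 2 * Real.log 2 + b * (Real.log 2)^2 := by
    have h4 : (Real.log 3)^2 * (1 + b/2) ≤ 1.21506529 * (1 + b/2) :=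
      mul_le_mul_of_nonneg_right e1 (by linarith)
    have h5 : b * 0.4804530135 ≤ b * (Real.log 2)^2 :=
      mul_le_mul_of_nonneg_left e3 hb0
    nlinarith
  have hrr : (Real.log 3)^2 * ((3/2:ℝ)^b) ≤ (Real.log 3)^2 * (1 + b/2) :=
    mul_le_mul_of_nonneg_left hr (by positivity)
  nlinarith [mul_le_mul_of_nonneg_right (hrr.trans key) hexp_pos.le]



lemma my_three_rpow {b : ℝ} (hb0 : 0 ≤ b) (hb1 : b ≤ 1) :
    1 + b * (2:ℝ) ^ b ≤ (3:ℝ) ^ b := by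
  set L2 := Real.log 2 with hL2def
  set L3 := Real.log 3 with hL3def
  set f : ℝ → ℝ := fun x => Real.exp (x * L3) - x * Real.exp (x * L2) - 1 with hf
  set f' : ℝ → ℝ := fun x => L3 * Real.exp (x * L3)
      - (Real.exp (x * L2) + x * L2 * Real.exp (x * L2)) with hf'
  have hder : ∀ x : ℝ, HasDerivAt f (f' x) x := by
    intro x
    have h3 : HasDerivAt (fun y : ℝ => Real.exp (y * L3)) (Real.exp (x * L3) * L3) x :=
      (hasDerivAt_mul_const L3).exp
    have h2 : HasDerivAt (fun y : ℝ => Real.exp (y * L2)) (Real.exp (x * L2) * L2) x :=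
      (hasDerivAt_mul_const L2).exp
    have h4 : HasDerivAt (fun y : ℝ => y * Real.exp (y * L2))
        (1 * Real.exp (x * L2) + x * (Real.exp (x * L2) * L2)) x :=
      (hasDerivAt_id x).mul h2
    have := (h3.sub h4).sub_const 1
    refine this.congr_deriv ?_
    simp only [hf']; ring
  set f'' : ℝ → ℝ := fun x => L3^2 * Real.exp (x * L3)
      - (2 * L2 * Real.exp (x * L2) + x * L2^2 * Real.exp (x * L2)) with hf''
  have hder2 : ∀ x : ℝ, HasDerivAt f' (f'' x) x := by
    intro x
    have h3 : HasDerivAt (fun y : ℝ => Real.exp (y * L3)) (Real.exp (x * L3) * L3) x :=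
      (hasDerivAt_mul_const L3).exp
    have h2 : HasDerivAt (fun y : ℝ => Real.exp (y * L2)) (Real.exp (x * L2) * L2) x :=
      (hasDerivAt_mul_const L2).exp
    have h4 : HasDerivAt (fun y : ℝ => y * L2 * Real.exp (y * L2))
        ((L2) * Real.exp (x * L2) + (x * L2) * (Real.exp (x * L2) * L2)) x :=
      ((hasDerivAt_mul_const L2).mul h2)
    have := (h3.const_mul L3).sub (h2.add h4)
    refine this.congr_deriv ?_
    simp only [hf'']; ring
  have hderiv_eq : deriv f = f' := funext fun x => (hder x).deriv
  have hconc : ConcaveOn ℝ (Set.Icc (0:ℝ) 1) f := by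
    apply concaveOn_of_deriv2_nonpos (convex_Icc 0 1)
    · exact Continuous.continuousOn (by fun_prop)
    · exact fun x _ => (hder x).differentiableAt.differentiableWithinAt
    · rw [hderiv_eq]
      exact fun x _ => (hder2 x).differentiableAt.differentiableWithinAt
    · intro x hx
      rw [interior_Icc] at hx
      have : deriv^[2] f x = f'' x := by
        simp only [Function.iterate_succ, Function.iterate_zero, Function.comp] 
        rw [hderiv_eq]
        exact (hder2 x).deriv
      rw [this, hf'']
      have := my_phi2 hx.1.le hx.2.le
      simp only [hL2def, hL3def] at *
      linarith
  have h0 : f 0 = 0 := by simp [hf]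
  have h1 : f 1 = 0 := by
    simp only [hf, one_mul]
    rw [Real.exp_log (by norm_num : (0:ℝ) < 3), Real.exp_log (by norm_num : (0:ℝ) < 2)]
    ring
  have hmem0 : (0:ℝ) ∈ Set.Icc (0:ℝ) 1 := by norm_num
  have hmem1 : (1:ℝ) ∈ Set.Icc (0:ℝ) 1 := by norm_num
  have := hconc.2 hmem0 hmem1 (by linarith : (0:ℝ) ≤ 1 - b) hb0 (by ring)
  simp only [smul_eq_mul, mul_zero, mul_one, zero_add, h0, h1] at this
  -- this : 0 ≤ f b
  have hfb : 0 ≤ f b := by linarith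
  have e3 : (3:ℝ) ^ b = Real.exp (b * L3) := by
    rw [Real.rpow_def_of_pos (by norm_num : (0:ℝ) < 3)]; rw [hL3def, mul_comm]
  have e2 : (2:ℝ) ^ b = Real.exp (b * L2) := by
    rw [Real.rpow_def_of_pos (by norm_num : (0:ℝ) < 2)]; rw [hL2def, mul_comm]
  rw [e3, e2]
  simp only [hf] at hfb
  linarith



lemma my_scalar {α t : ℝ} (hα : α ∈ Set.Ioo (0:ℝ) 1) (ht0 : 0 ≤ t) (ht2 : t ≤ 2) :
    (1 - α) * t ≤ (2:ℝ) ^ α * ((1 + t) ^ (1 - α) - 1) := by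
  obtain ⟨hα0, hα1⟩ := hα
  set b := 1 - α with hb
  have hb0 : 0 ≤ b := by linarith
  have hb1 : b ≤ 1 := by linarith
  -- chord inequality for concave rpow
  have hchord : (1 - t/2) + (t/2) * (3:ℝ) ^ b ≤ (1 + t) ^ b := by
    have hc := (Real.concaveOn_rpow hb0 hb1).2
      (Set.mem_Ici.mpr (by norm_num : (0:ℝ) ≤ 1))
      (Set.mem_Ici.mpr (by norm_num : (0:ℝ) ≤ 3))
      (by linarith : (0:ℝ) ≤ 1 - t/2) (by linarith : (0:ℝ) ≤ t/2) (by ring)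
    simp only [smul_eq_mul, mul_one, Real.one_rpow] at hc
    have heq : (1 - t/2 + t/2 * 3 : ℝ) = 1 + t := by ring
    rw [heq] at hc
    linarith
  have h3 := my_three_rpow hb0 hb1
  have h2pos : (0:ℝ) < (2:ℝ) ^ α := Real.rpow_pos_of_pos (by norm_num) _
  have h2b : (0:ℝ) < (2:ℝ) ^ b := Real.rpow_pos_of_pos (by norm_num) _
  have hmul : (2:ℝ) ^ α * (2:ℝ) ^ b = 2 := by
    rw [← Real.rpow_add (by norm_num : (0:ℝ) < 2)]
    norm_num [hb]
  -- (1+t)^b - 1 ≥ (t/2)(3^b - 1) ≥ (t/2) b 2^b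
  have step : (t/2) * (b * (2:ℝ)^b) ≤ (1 + t)^b - 1 := by
    have h1 : (t/2) * (b * (2:ℝ)^b) ≤ (t/2) * ((3:ℝ)^b - 1) := by
      apply mul_le_mul_of_nonneg_left _ (by linarith)
      linarith
    linarith
  have := mul_le_mul_of_nonneg_left step h2pos.le
  calc (1 - α) * t = (2:ℝ)^α * ((t/2) * (b * (2:ℝ)^b)) := by
        linear_combination (-(t * b / 2)) * hmul
    _ ≤ (2:ℝ)^α * ((1 + t)^b - 1) := this

lemma my_scaled {α s m : ℝ} (hα : α ∈ Set.Ioo (0:ℝ) 1) (hs : 1 ≤ s)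
    (hm0 : 0 ≤ m) (hm2 : m ≤ 2 * s) :
    m / s ^ α ≤ (2:ℝ) ^ α / (1 - α) * ((s + m) ^ (1 - α) - s ^ (1 - α)) := by
  obtain ⟨hα0, hα1⟩ := hα
  have hspos : (0:ℝ) < s := by linarith
  set t := m / s with htdef
  have ht0 : 0 ≤ t := div_nonneg hm0 hspos.le
  have ht2 : t ≤ 2 := by rw [htdef, div_le_iff₀ hspos]; linarith
  have key := my_scalar ⟨hα0, hα1⟩ ht0 ht2
  have hsb : (0:ℝ) < s ^ (1 - α) := Real.rpow_pos_of_pos hspos _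
  have := mul_le_mul_of_nonneg_right key hsb.le
  have hmulr : ((1 + t) ^ (1 - α)) * s ^ (1 - α) = (s + m) ^ (1 - α) := by
    rw [← Real.mul_rpow (by linarith) hspos.le]
    congr 1
    rw [htdef]
    field_simp
  have hts : t * s ^ (1 - α) = m / s ^ α := by
    rw [Real.rpow_sub hspos, Real.rpow_one, htdef]
    field_simp
  rw [div_mul_eq_mul_div, le_div_iff₀ (by linarith : (0:ℝ) < 1 - α)]
  calc m / s ^ α * (1 - α) = ((1 - α) * t) * s ^ (1 - α) := by
        linear_combination (α - 1) * hts
    _ ≤ ((2:ℝ) ^ α * ((1 + t) ^ (1 - α) - 1)) * s ^ (1 - α) := this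
    _ = (2:ℝ) ^ α * ((s + m) ^ (1 - α) - s ^ (1 - α)) := by
        rw [← hmulr]; ring



/-- Summing `min(e_{j+1}, N - S_j) / S_j^α` over all stages completed within the first
`N` items is bounded by `(2^α/(1-α)) · N^(1-α)`. -/
theorem stage_sum_rpow_bound
    (H : ℕ) (hH : 1 ≤ H) (e : ℕ → ℕ)
    (he1 : e 1 = H)
    (herec : ∀ i : ℕ, 1 ≤ i → e (i + 1) = ⌊(1 + 1 / (H : ℝ)) * (e i : ℝ)⌋₊)
    (S : ℕ → ℕ) (hS : ∀ j : ℕ, S j = ∑ i ∈ Finset.Icc 1 j, e i)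
    (α N : ℝ) (hα : α ∈ Set.Ioo (0 : ℝ) 1) (hN : 1 ≤ N) :
    ∑' j : {j : ℕ // 1 ≤ j ∧ (S j : ℝ) ≤ N},
        min ((e ((j : ℕ) + 1) : ℝ)) (N - (S (j : ℕ) : ℝ)) / ((S (j : ℕ) : ℝ)) ^ α
      ≤ (2 : ℝ) ^ α / (1 - α) * N ^ (1 - α) := by
  obtain ⟨hα0, hα1⟩ := hα
  have hHR : (1:ℝ) ≤ (H:ℝ) := by exact_mod_cast hH
  -- basic facts about e
  have he_pos : ∀ i : ℕ, 1 ≤ i → 1 ≤ e i := by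
    intro i hi
    induction i, hi using Nat.le_induction with
    | base => rw [he1]; exact hH
    | succ n hn ih =>
      rw [herec n hn]
      rw [Nat.le_floor_iff (by positivity)]
      have h1 : (1:ℝ) ≤ (e n : ℝ) := by exact_mod_cast ih
      have h2 : (0:ℝ) < 1/(H:ℝ) := by positivity
      push_cast
      nlinarith
  have he_double : ∀ i : ℕ, 1 ≤ i → e (i + 1) ≤ 2 * e i := by
    intro i hi
    rw [herec i hi]
    have : (1 + 1/(H:ℝ)) * (e i : ℝ) ≤ ((2 * e i : ℕ) : ℝ) := by
      push_cast
      have hinv : 1/(H:ℝ) ≤ 1 := by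
        rw [div_le_one (by linarith)]; exact hHR
      nlinarith [Nat.cast_nonneg (α := ℝ) (e i)]
    calc ⌊(1 + 1/(H:ℝ)) * (e i : ℝ)⌋₊ ≤ ⌊((2 * e i : ℕ) : ℝ)⌋₊ := Nat.floor_le_floor this
      _ = 2 * e i := Nat.floor_natCast _
  -- basic facts about S
  have hS_mono : ∀ j k : ℕ, j ≤ k → S j ≤ S k := by
    intro j k hjk
    rw [hS j, hS k]
    exact Finset.sum_le_sum_of_subset (Finset.Icc_subset_Icc_right hjk)
  have hS_ge : ∀ j : ℕ, j ≤ S j := by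
    intro j
    rw [hS j]
    calc j = ∑ i ∈ Finset.Icc 1 j, 1 := by
          rw [Finset.sum_const, Nat.card_Icc]; simp
      _ ≤ ∑ i ∈ Finset.Icc 1 j, e i :=
          Finset.sum_le_sum fun i hi => he_pos i (Finset.mem_Icc.mp hi).1
  have he_le_S : ∀ j : ℕ, 1 ≤ j → e j ≤ S j := by
    intro j hj
    rw [hS j]
    exact Finset.single_le_sum (f := fun i => e i) (fun i _ => Nat.zero_le _)
      (Finset.mem_Icc.mpr ⟨hj, le_refl j⟩)
  have hSsucc : ∀ j : ℕ, 1 ≤ j → S (j + 1) = S j + e (j + 1) := by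
    intro j hj
    rw [hS (j+1), hS j, Finset.sum_Icc_succ_top (by omega : 1 ≤ j + 1)]
  -- setup
  set C : ℝ := (2:ℝ) ^ α / (1 - α) with hC
  have hCpos : 0 < C := by
    apply div_pos (Real.rpow_pos_of_pos (by norm_num) _) (by linarith)
  set mm : ℕ → ℝ := fun j => min ((e (j+1) : ℝ)) (N - (S j : ℝ)) with hmm
  set f : ℕ → ℝ := fun j => mm j / ((S j : ℝ)) ^ α with hf
  -- the index set equals a finset
  set F : Finset ℕ := (Finset.Icc 1 ⌊N⌋₊).filter (fun j => (S j : ℝ) ≤ N) with hF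
  have hiff : ∀ j : ℕ, j ∈ F ↔ 1 ≤ j ∧ (S j : ℝ) ≤ N := by
    intro j
    rw [hF, Finset.mem_filter, Finset.mem_Icc]
    constructor
    · rintro ⟨⟨h1, _⟩, h2⟩; exact ⟨h1, h2⟩
    · rintro ⟨h1, h2⟩
      refine ⟨⟨h1, ?_⟩, h2⟩
      apply Nat.le_floor
      calc (j:ℝ) ≤ (S j : ℝ) := by exact_mod_cast hS_ge j
        _ ≤ N := h2
  haveI : Fintype {j : ℕ // 1 ≤ j ∧ (S j : ℝ) ≤ N} := Fintype.subtype F hiff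
  rw [tsum_fintype]
  rw [← Finset.sum_subtype F hiff f]
  -- per-term bound
  have hterm : ∀ j : ℕ, 1 ≤ j → (S j : ℝ) ≤ N →
      f j ≤ C * (((S j : ℝ) + mm j) ^ (1-α) - ((S j : ℝ)) ^ (1-α)) := by
    intro j hj hjN
    have hs1 : (1:ℝ) ≤ (S j : ℝ) := by exact_mod_cast (hj.trans (hS_ge j))
    have hm0 : 0 ≤ mm j := le_min (by positivity) (by linarith)
    have hm2 : mm j ≤ 2 * (S j : ℝ) := by
      calc mm j ≤ (e (j+1) : ℝ) := min_le_left _ _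
        _ ≤ 2 * (S j : ℝ) := by
            have := (he_double j hj).trans (Nat.mul_le_mul_left 2 (he_le_S j hj))
            exact_mod_cast this
    exact my_scaled ⟨hα0, hα1⟩ hs1 hm0 hm2
  -- telescoping induction
  have hmain : ∀ J : ℕ, 1 ≤ J → (S J : ℝ) ≤ N →
      ∑ j ∈ Finset.Icc 1 J, f j ≤ C * ((S J : ℝ) + mm J) ^ (1-α) := by
    intro J hJ
    induction J, hJ using Nat.le_induction with
    | base =>
      intro h1N
      rw [Finset.Icc_self, Finset.sum_singleton]
      have h := hterm 1 le_rfl h1N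
      have hnn : 0 ≤ ((S 1 : ℝ)) ^ (1-α) := Real.rpow_nonneg (by positivity) _
      nlinarith
    | succ n hn ih =>
      intro hSN
      have hSn_le : (S n : ℝ) ≤ (S (n+1) : ℝ) := by exact_mod_cast hS_mono n (n+1) (by omega)
      have hSnN : (S n : ℝ) ≤ N := hSn_le.trans hSN
      rw [Finset.sum_Icc_succ_top (by omega : 1 ≤ n + 1)]
      have h1 := ih hSnN
      have h2 := hterm (n+1) (by omega) hSN
      have h3 : (S n : ℝ) + mm n ≤ (S (n+1) : ℝ) := by
        have : mm n ≤ (e (n+1) : ℝ) := min_le_left _ _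
        have hs : (S (n+1) : ℝ) = (S n : ℝ) + (e (n+1) : ℝ) := by
          rw [hSsucc n hn]; push_cast; ring
        linarith
      have h4 : ((S n : ℝ) + mm n) ^ (1-α) ≤ ((S (n+1) : ℝ)) ^ (1-α) := by
        apply Real.rpow_le_rpow _ h3 (by linarith)
        have hs1 : (1:ℝ) ≤ (S n : ℝ) := by exact_mod_cast (hn.trans (hS_ge n))
        have : 0 ≤ mm n := le_min (by positivity) (by linarith)
        linarith
      nlinarith [mul_le_mul_of_nonneg_left h4 hCpos.le]
  -- conclude
  rcases F.eq_empty_or_nonempty with hFe | hFne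
  · rw [hFe, Finset.sum_empty]
    have : (0:ℝ) ≤ N ^ (1-α) := Real.rpow_nonneg (by linarith) _
    positivity
  · set J := F.max' hFne with hJ
    have hJmem := F.max'_mem hFne
    obtain ⟨hJ1, hJN⟩ := (hiff J).mp hJmem
    have hFeq : F = Finset.Icc 1 J := by
      ext j
      rw [hiff j, Finset.mem_Icc]
      constructor
      · rintro ⟨h1, h2⟩
        exact ⟨h1, F.le_max' j ((hiff j).mpr ⟨h1, h2⟩)⟩
      · rintro ⟨h1, h2⟩
        refine ⟨h1, ?_⟩
        calc (S j : ℝ) ≤ (S J : ℝ) := by exact_mod_cast hS_mono j J h2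
          _ ≤ N := hJN
    rw [hFeq]
    have hsum := hmain J hJ1 hJN
    have hle : (S J : ℝ) + mm J ≤ N := by
      have : mm J ≤ N - (S J : ℝ) := min_le_right _ _
      linarith
    have h0 : (0:ℝ) ≤ (S J : ℝ) + mm J := by
      have hs1 : (1:ℝ) ≤ (S J : ℝ) := by exact_mod_cast (hJ1.trans (hS_ge J))
      have : 0 ≤ mm J := le_min (by positivity) (by linarith)
      linarith
    have hfin : ((S J : ℝ) + mm J) ^ (1-α) ≤ N ^ (1-α) :=
      Real.rpow_le_rpow h0 hle (by linarith)
    calc ∑ j ∈ Finset.Icc 1 J, f j ≤ C * ((S J : ℝ) + mm J) ^ (1-α) := hsum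
      _ ≤ C * N ^ (1-α) := mul_le_mul_of_nonneg_left hfin hCpos.le
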